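/- Fix ε > 0 and let Z_1, …, Z_N be i.i.d. real-valued random variables with a continuous cumulative distribution function F. Split the sample at its empirical median m̂, and call the cut 'bad' if one of the two resulting halves carries true probability mass exceeding √(1+ε)/2, i.e., if max(F(m̂), 1 − F(m̂)) > √(1+ε)/2. Then P(the cut is bad) ≤ 2·exp( −(1/2)·N·(√(1+ε) − 1)² ). -/

import Mathlib

open MeasureTheory Filter

/-- The empirical median of a finite multiset of reals: the `⌈N/2⌉`-th order statistic,
i.e. the entry at (0-based) index `⌈N/2⌉ - 1 = (N+1)/2 - 1` of the sorted list of values. -/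
noncomputable def empMedian (s : Multiset ℝ) : ℝ :=
  (s.sort (· ≤ ·)).getD ((Multiset.card s + 1) / 2 - 1) 0

section helpers

open ProbabilityTheory Real

set_option linter.unusedSectionVars false
set_option linter.unusedVariables false

lemma bernoulli_mgf_le' {p : ℝ} (hp0 : 0 ≤ p) (hp1 : p ≤ 1) (θ : ℝ) :
    1 - p + p * Real.exp θ ≤ Real.exp (p * θ + θ ^ 2 / 8) := by
  have hden : ∀ x : ℝ, 0 < 1 - p + p * Real.exp x := by
    intro x
    rcases eq_or_lt_of_le hp0 with h | h
    · simp [← h]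
    · have := Real.exp_pos x
      nlinarith
  set g : ℝ → ℝ := fun x => p + x / 4 - p * Real.exp x / (1 - p + p * Real.exp x) with hgdef
  have hden' : ∀ x : ℝ, HasDerivAt (fun x => 1 - p + p * Real.exp x) (p * Real.exp x) x := by
    intro x
    simpa using ((Real.hasDerivAt_exp x).const_mul p).const_add (1 - p)
  have hg : ∀ x : ℝ, HasDerivAt g
      (1 / 4 - p * Real.exp x * (1 - p) / (1 - p + p * Real.exp x) ^ 2) x := by
    intro x
    have h1 : HasDerivAt (fun x : ℝ => p * Real.exp x) (p * Real.exp x) x :=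
      (Real.hasDerivAt_exp x).const_mul p
    have hq := h1.div (hden' x) (hden x).ne'
    have h2 : HasDerivAt (fun x : ℝ => p + x / 4) (1 / 4) x := by
      simpa using ((hasDerivAt_id x).div_const 4).const_add p
    have := h2.fun_sub hq
    refine this.congr_deriv ?_
    have hd := (hden x).ne'
    field_simp
    ring
  have hgmono : Monotone g := by
    refine monotone_of_deriv_nonneg (fun x => (hg x).differentiableAt) ?_
    intro x
    rw [(hg x).deriv]
    have hd := hden x
    have he := Real.exp_pos x
    rw [sub_nonneg, div_le_iff₀ (by positivity)]
    nlinarith [sq_nonneg (1 - p - p * Real.exp x)]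
  have hg0 : g 0 = 0 := by
    simp only [hgdef, Real.exp_zero, mul_one]
    field_simp
    ring
  set f : ℝ → ℝ := fun x => p * x + x ^ 2 / 8 - Real.log (1 - p + p * Real.exp x) with hfdef
  have hf : ∀ x : ℝ, HasDerivAt f (g x) x := by
    intro x
    have hlog : HasDerivAt (fun x => Real.log (1 - p + p * Real.exp x))
        (p * Real.exp x / (1 - p + p * Real.exp x)) x := (hden' x).log (hden x).ne'
    have h2 : HasDerivAt (fun x : ℝ => p * x + x ^ 2 / 8) (p + 2 * x / 8) x := by
      have h3 : HasDerivAt (fun y : ℝ => p * y) p x := by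
        simpa using (hasDerivAt_id x).const_mul p
      simpa [pow_one] using h3.fun_add ((hasDerivAt_pow 2 x).div_const 8)
    have := h2.fun_sub hlog
    refine this.congr_deriv ?_
    simp only [hgdef]
    ring
  have hf0 : f 0 = 0 := by simp [hfdef]
  have hfcont : Continuous f :=
    continuous_iff_continuousAt.mpr fun x => (hf x).differentiableAt.continuousAt
  have hfnonneg : 0 ≤ f θ := by
    rcases le_or_gt 0 θ with h | h
    · have hmono : MonotoneOn f (Set.Ici (0:ℝ)) := by
        refine monotoneOn_of_deriv_nonneg (convex_Ici 0)
          hfcont.continuousOn ?_ ?_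
        · intro x _
          exact (hf x).differentiableAt.differentiableWithinAt
        · intro x hx
          rw [(hf x).deriv]
          rw [interior_Ici] at hx
          have := hgmono (le_of_lt hx)
          rwa [hg0] at this
      have := hmono (Set.self_mem_Ici) (Set.mem_Ici.mpr h) h
      rwa [hf0] at this
    · have hmono : AntitoneOn f (Set.Iic (0:ℝ)) := by
        refine antitoneOn_of_deriv_nonpos (convex_Iic 0)
          hfcont.continuousOn ?_ ?_
        · intro x _
          exact (hf x).differentiableAt.differentiableWithinAt
        · intro x hx
          rw [(hf x).deriv]
          rw [interior_Iic] at hx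
          have := hgmono (le_of_lt hx)
          rwa [hg0] at this
      have := hmono (Set.mem_Iic.mpr h.le) (Set.self_mem_Iic) h.le
      rwa [hf0] at this
  have hlog : Real.log (1 - p + p * Real.exp θ) ≤ p * θ + θ ^ 2 / 8 := by
    simp only [hfdef] at hfnonneg; linarith
  calc 1 - p + p * Real.exp θ = Real.exp (Real.log (1 - p + p * Real.exp θ)) :=
        (Real.exp_log (hden θ)).symm
    _ ≤ _ := Real.exp_le_exp.mpr hlog

lemma sorted_index_lt_countP {l : List ℝ} (h : l.Pairwise (· ≤ ·)) {i : ℕ} (hi : i < l.length)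
    {t : ℝ} (ht : l.getD i 0 ≤ t) : i < l.countP (fun x => decide (x ≤ t)) := by
  have hpw := List.pairwise_iff_getElem.mp h
  rw [List.getD_eq_getElem l 0 hi] at ht
  have h1 : (l.take (i+1)).countP (fun x => decide (x ≤ t)) = i + 1 := by
    rw [List.countP_eq_length.mpr, List.length_take]
    · omega
    · intro x hx
      rw [List.mem_take_iff_getElem] at hx
      obtain ⟨j, hj, rfl⟩ := hx
      have hji : j ≤ i := by omega
      simp only [decide_eq_true_eq]
      rcases eq_or_lt_of_le hji with rfl | hlt
      · exact ht
      · exact le_trans (hpw j i (by omega) hi hlt) ht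
  calc i < i + 1 := Nat.lt_succ_self i
    _ = (l.take (i+1)).countP (fun x => decide (x ≤ t)) := h1.symm
    _ ≤ l.countP (fun x => decide (x ≤ t)) := by
        conv_rhs => rw [← List.take_append_drop (i+1) l]
        rw [List.countP_append]
        omega

lemma sorted_countP_le_index {l : List ℝ} (h : l.Pairwise (· ≤ ·)) {i : ℕ} (hi : i < l.length)
    {t : ℝ} (ht : t < l.getD i 0) : l.countP (fun x => decide (x ≤ t)) ≤ i := by
  have hpw := List.pairwise_iff_getElem.mp h
  rw [List.getD_eq_getElem l 0 hi] at ht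
  have h0 : (l.drop i).countP (fun x => decide (x ≤ t)) = 0 := by
    rw [List.countP_eq_zero]
    intro x hx
    rw [List.mem_iff_getElem] at hx
    obtain ⟨j, hj, rfl⟩ := hx
    rw [List.getElem_drop]
    simp only [decide_eq_true_eq, not_le]
    have hlen : i + j < l.length := by
      rw [List.length_drop] at hj; omega
    rcases Nat.eq_zero_or_pos j with rfl | hj0
    · simpa using ht
    · exact lt_of_lt_of_le ht (hpw i (i+j) hi hlen (by omega))
  conv_lhs => rw [← List.take_append_drop i l]
  rw [List.countP_append, h0, Nat.add_zero]
  calc (l.take i).countP _ ≤ (l.take i).length := List.countP_le_length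
    _ ≤ i := by rw [List.length_take]; omega

noncomputable def YY {Ω : Type*} {N : ℕ} (Z : Fin N → Ω → ℝ) (c : ℝ) (i : Fin N) (ω : Ω) : ℝ :=
  if Z i ω ≤ c then 1 else 0

variable {Ω : Type*} [MeasurableSpace Ω] {N : ℕ}

lemma Ymeas (Z : Fin N → Ω → ℝ) (hZmeas : ∀ i, Measurable (Z i)) (c : ℝ) (i : Fin N) :
    Measurable (YY Z c i) := by
  unfold YY
  exact Measurable.ite ((hZmeas i) measurableSet_Iic) measurable_const measurable_const

lemma Yint (μ : Measure Ω) [IsProbabilityMeasure μ] (Z : Fin N → Ω → ℝ)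
    (hZmeas : ∀ i, Measurable (Z i)) (c : ℝ) (i : Fin N) (θ : ℝ) :
    Integrable (fun ω => Real.exp (θ * YY Z c i ω)) μ := by
  have hb : ∀ ω, ‖Real.exp (θ * YY Z c i ω)‖ ≤ Real.exp |θ| := by
    intro ω
    unfold YY
    rw [Real.norm_eq_abs, Real.abs_exp, Real.exp_le_exp]
    by_cases h : Z i ω ≤ c
    · simp [h]; exact le_abs_self θ
    · simp [h]
  exact (Integrable.mono' (integrable_const _)
    ((((Ymeas Z hZmeas c i).const_mul θ).exp).aestronglyMeasurable)
    (Filter.Eventually.of_forall hb))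

lemma Ymgf (μ : Measure Ω) [IsProbabilityMeasure μ] (Z : Fin N → Ω → ℝ)
    (hZmeas : ∀ i, Measurable (Z i)) (c : ℝ) (i : Fin N) (θ : ℝ) {p : ℝ}
    (hp : (μ ((Z i) ⁻¹' Set.Iic c)).toReal = p) :
    mgf (YY Z c i) μ θ = 1 - p + p * Real.exp θ := by
  have hA : MeasurableSet ((Z i) ⁻¹' Set.Iic c) := (hZmeas i) measurableSet_Iic
  have heq : (fun ω => Real.exp (θ * YY Z c i ω)) =
      fun ω => ((Z i) ⁻¹' Set.Iic c).indicator (fun _ => Real.exp θ - 1) ω + 1 := by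
    funext ω
    unfold YY
    by_cases h : Z i ω ≤ c <;>
      simp [Set.indicator, h, Set.mem_preimage, Set.mem_Iic]
  rw [mgf, heq, integral_add ((integrable_const _).indicator hA) (integrable_const _),
    integral_indicator_const _ hA, integral_const]
  simp [hp, smul_eq_mul]
  rw [measureReal_def, hp]
  ring

lemma YindepY (μ : Measure Ω) (Z : Fin N → Ω → ℝ)
    (hindep : ProbabilityTheory.iIndepFun Z μ) (c : ℝ) :
    ProbabilityTheory.iIndepFun (YY Z c) μ := by
  have := hindep.comp (fun _ (x : ℝ) => if x ≤ c then (1:ℝ) else 0)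
    (fun _ => Measurable.ite measurableSet_Iic measurable_const measurable_const)
  convert this using 2 with i
  rfl

lemma Ymgfsum (μ : Measure Ω) [IsProbabilityMeasure μ] (Z : Fin N → Ω → ℝ)
    (hZmeas : ∀ i, Measurable (Z i))
    (hindep : ProbabilityTheory.iIndepFun Z μ) (c : ℝ) (θ : ℝ)
    {p : ℝ} (hp : ∀ i, (μ ((Z i) ⁻¹' Set.Iic c)).toReal = p) :
    mgf (∑ i, YY Z c i) μ θ = (1 - p + p * Real.exp θ)^N := by
  rw [(YindepY μ Z hindep c).mgf_sum (fun i => Ymeas Z hZmeas c i)]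
  rw [Finset.prod_congr rfl (fun i _ => Ymgf μ Z hZmeas c i θ (hp i))]
  simp [Finset.prod_const]

lemma Ybound {p a : ℝ} (hN : 0 < N) (hp0 : 0 ≤ p) (hp1 : p ≤ 1) (θ : ℝ)
    (hkey : -θ * a + N * (p * θ + θ^2/8) ≤ -2 * (N * p - a)^2 / N) :
    Real.exp (-θ * a) * (1 - p + p * Real.exp θ)^N ≤ Real.exp (-2 * (N * p - a)^2 / N) := by
  have h1 : (1 - p + p * Real.exp θ)^N ≤ (Real.exp (p * θ + θ^2/8))^N := by
    apply pow_le_pow_left₀ _ (bernoulli_mgf_le' hp0 hp1 θ)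
    rcases eq_or_lt_of_le hp0 with h | h
    · simp [← h]
    · nlinarith [Real.exp_pos θ]
  calc Real.exp (-θ * a) * (1 - p + p * Real.exp θ)^N
      ≤ Real.exp (-θ * a) * (Real.exp (p * θ + θ^2/8))^N :=
        mul_le_mul_of_nonneg_left h1 (Real.exp_nonneg _)
    _ = Real.exp (-θ * a + N * (p * θ + θ^2/8)) := by
        rw [← Real.exp_nat_mul, ← Real.exp_add]
    _ ≤ _ := Real.exp_le_exp.mpr hkey

lemma chernoff_lower (μ : Measure Ω) [IsProbabilityMeasure μ] (Z : Fin N → Ω → ℝ)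
    (hZmeas : ∀ i, Measurable (Z i)) (c : ℝ) (hN : 0 < N)
    (hindep : ProbabilityTheory.iIndepFun Z μ)
    {p : ℝ} (hp : ∀ i, (μ ((Z i) ⁻¹' Set.Iic c)).toReal = p) (hp0 : 0 ≤ p) (hp1 : p ≤ 1)
    {a : ℝ} (ha : a ≤ N * p) :
    μ {ω | (∑ i : Fin N, if Z i ω ≤ c then (1:ℝ) else 0) ≤ a}
      ≤ ENNReal.ofReal (Real.exp (-2 * (N * p - a)^2 / N)) := by
  classical
  have hNpos : (0:ℝ) < N := by exact_mod_cast hN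
  set θ : ℝ := -4 * (N * p - a) / N with hθdef
  have hθ : θ ≤ 0 := by
    apply div_nonpos_of_nonpos_of_nonneg <;> [nlinarith; positivity]
  have hint : Integrable (fun ω => Real.exp (θ * (∑ i, YY Z c i) ω)) μ :=
    (YindepY μ Z hindep c).integrable_exp_mul_sum (fun i => Ymeas Z hZmeas c i)
      (fun i _ => Yint μ Z hZmeas c i θ)
  have hcher := ProbabilityTheory.measure_le_le_exp_mul_mgf (μ := μ) (X := ∑ i, YY Z c i) a hθ hint
  rw [Ymgfsum μ Z hZmeas hindep c θ hp] at hcher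
  have hsetEq : {ω | (∑ i, YY Z c i) ω ≤ a}
      = {ω | (∑ i : Fin N, if Z i ω ≤ c then (1:ℝ) else 0) ≤ a} := by
    ext ω; simp [Finset.sum_apply, YY]
  rw [hsetEq] at hcher
  have hkey : -θ * a + N * (p * θ + θ^2/8) ≤ -2 * (N * p - a)^2 / N := by
    rw [hθdef]
    field_simp
    nlinarith [sq_nonneg (N*p - a), hNpos]
  have hbound := Ybound hN hp0 hp1 θ hkey
  calc μ _ = ENNReal.ofReal ((μ {ω | (∑ i : Fin N, if Z i ω ≤ c then (1:ℝ) else 0) ≤ a}).toReal) := by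
        rw [ENNReal.ofReal_toReal (measure_ne_top _ _)]
    _ ≤ ENNReal.ofReal (Real.exp (-2 * (N * p - a)^2 / N)) :=
        ENNReal.ofReal_le_ofReal (hcher.trans hbound)

lemma chernoff_upper (μ : Measure Ω) [IsProbabilityMeasure μ] (Z : Fin N → Ω → ℝ)
    (hZmeas : ∀ i, Measurable (Z i)) (c : ℝ) (hN : 0 < N)
    (hindep : ProbabilityTheory.iIndepFun Z μ)
    {p : ℝ} (hp : ∀ i, (μ ((Z i) ⁻¹' Set.Iic c)).toReal = p) (hp0 : 0 ≤ p) (hp1 : p ≤ 1)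
    {a : ℝ} (ha : N * p ≤ a) :
    μ {ω | a ≤ (∑ i : Fin N, if Z i ω ≤ c then (1:ℝ) else 0)}
      ≤ ENNReal.ofReal (Real.exp (-2 * (N * p - a)^2 / N)) := by
  classical
  have hNpos : (0:ℝ) < N := by exact_mod_cast hN
  set θ : ℝ := 4 * (a - N * p) / N with hθdef
  have hθ : 0 ≤ θ := by
    apply div_nonneg _ (by positivity)
    nlinarith
  have hint : Integrable (fun ω => Real.exp (θ * (∑ i, YY Z c i) ω)) μ :=
    (YindepY μ Z hindep c).integrable_exp_mul_sum (fun i => Ymeas Z hZmeas c i)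
      (fun i _ => Yint μ Z hZmeas c i θ)
  have hcher := ProbabilityTheory.measure_ge_le_exp_mul_mgf (μ := μ) (X := ∑ i, YY Z c i) a hθ hint
  rw [Ymgfsum μ Z hZmeas hindep c θ hp] at hcher
  have hsetEq : {ω | a ≤ (∑ i, YY Z c i) ω}
      = {ω | a ≤ (∑ i : Fin N, if Z i ω ≤ c then (1:ℝ) else 0)} := by
    ext ω; simp [Finset.sum_apply, YY]
  rw [hsetEq] at hcher
  have hkey : -θ * a + N * (p * θ + θ^2/8) ≤ -2 * (N * p - a)^2 / N := by
    rw [hθdef]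
    field_simp
    nlinarith [sq_nonneg (N*p - a), hNpos]
  have hbound := Ybound hN hp0 hp1 θ hkey
  calc μ _ = ENNReal.ofReal ((μ {ω | a ≤ (∑ i : Fin N, if Z i ω ≤ c then (1:ℝ) else 0)}).toReal) := by
        rw [ENNReal.ofReal_toReal (measure_ne_top _ _)]
    _ ≤ ENNReal.ofReal (Real.exp (-2 * (N * p - a)^2 / N)) :=
        ENNReal.ofReal_le_ofReal (hcher.trans hbound)

lemma exists_cdf_eq (ν : Measure ℝ) [IsProbabilityMeasure ν] (F : ℝ → ℝ)
    (hF : ∀ t, F t = (ν (Set.Iic t)).toReal) (hFcont : Continuous F)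
    {y : ℝ} (h0 : 0 < y) (h1 : y < 1) : ∃ t, F t = y := by
  have hcdf : F = ProbabilityTheory.cdf ν := by
    funext x
    rw [hF x, ProbabilityTheory.cdf_eq_real, measureReal_def]
  have hbot : Tendsto F atBot (nhds 0) := by
    rw [hcdf]; exact ProbabilityTheory.tendsto_cdf_atBot ν
  have htop : Tendsto F atTop (nhds 1) := by
    rw [hcdf]; exact ProbabilityTheory.tendsto_cdf_atTop ν
  obtain ⟨a, haF⟩ := (hbot.eventually_lt_const h0).exists
  obtain ⟨b, hbF⟩ := (htop.eventually_const_lt h1).exists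
  have hmono : Monotone F := by rw [hcdf]; exact ProbabilityTheory.monotone_cdf ν
  have hab : a ≤ b := by
    by_contra h
    exact absurd (hmono (le_of_not_ge h)) (by linarith)
  have := intermediate_value_Icc hab hFcont.continuousOn
    (Set.mem_Icc.mpr ⟨haF.le, hbF.le⟩)
  obtain ⟨t, _, ht⟩ := this
  exact ⟨t, ht⟩

lemma count_bridge (Z : Fin N → Ω → ℝ) (ω : Ω) (c : ℝ) :
    ((Finset.univ.val.map fun i => Z i ω).sort (· ≤ ·)).countP (fun x => decide (x ≤ c))
      = (Finset.univ.filter (fun i => Z i ω ≤ c)).card := by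
  classical
  have h1 : ((Finset.univ.val.map fun i => Z i ω).sort (· ≤ ·)).countP (fun x => decide (x ≤ c))
      = Multiset.countP (fun x => x ≤ c) (Finset.univ.val.map fun i => Z i ω) := by
    conv_rhs => rw [← Multiset.sort_eq (Finset.univ.val.map fun i => Z i ω) (· ≤ ·)]
    rw [Multiset.coe_countP]
  rw [h1, Multiset.countP_map]
  rfl

end helpers

set_option maxHeartbeats 1000000 in
/-- For `N` i.i.d. real random variables with a continuous CDF `F`, the probability that the
split at the empirical median `m̂` is 'bad', i.e. that one of the two halves carries true
probability mass exceeding `√(1+ε)/2`, is at most `2·exp(-(1/2)·N·(√(1+ε) - 1)²)`. -/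
theorem bad_median_cut_probability_bound
    {Ω : Type*} [MeasurableSpace Ω] (μ : Measure Ω) [IsProbabilityMeasure μ]
    (ε : ℝ) (hε : 0 < ε) (N : ℕ)
    (Z : Fin N → Ω → ℝ) (hZmeas : ∀ i, Measurable (Z i))
    (ν : Measure ℝ) [IsProbabilityMeasure ν]
    (hid : ∀ i, Measure.map (Z i) μ = ν)
    (hindep : ProbabilityTheory.iIndepFun Z μ)
    (F : ℝ → ℝ) (hF : ∀ t, F t = (ν (Set.Iic t)).toReal) (hFcont : Continuous F) :
    μ {ω | Real.sqrt (1 + ε) / 2 <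
        max (F (empMedian (Finset.univ.val.map fun i => Z i ω)))
            (1 - F (empMedian (Finset.univ.val.map fun i => Z i ω)))}
      ≤ ENNReal.ofReal (2 * Real.exp (-(1 / 2) * N * (Real.sqrt (1 + ε) - 1) ^ 2)) := by
  classical
  set s : ℝ := Real.sqrt (1 + ε) / 2 with hsdef
  have hsqrt1 : 1 < Real.sqrt (1 + ε) := by
    by_contra h
    push_neg at h
    nlinarith [Real.sq_sqrt (by linarith : (0:ℝ) ≤ 1 + ε), Real.sqrt_nonneg (1 + ε)]
  have hs_half : 1/2 < s := by rw [hsdef]; linarith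
  -- F is bounded in [0,1]
  have hF01 : ∀ x, 0 ≤ F x ∧ F x ≤ 1 := by
    intro x
    rw [hF x]
    constructor
    · exact ENNReal.toReal_nonneg
    · have := prob_le_one (μ := ν) (s := Set.Iic x)
      calc (ν (Set.Iic x)).toReal ≤ (1 : ENNReal).toReal :=
            ENNReal.toReal_mono (by norm_num) this
        _ = 1 := by simp
  rcases le_or_gt 1 s with hs1 | hs1
  · -- trivial case: event is empty
    have : {ω | s < max (F (empMedian (Finset.univ.val.map fun i => Z i ω)))
        (1 - F (empMedian (Finset.univ.val.map fun i => Z i ω)))} = ∅ := by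
      ext ω
      simp only [Set.mem_setOf_eq, Set.mem_empty_iff_false, iff_false, not_lt, max_le_iff]
      obtain ⟨h0, h1⟩ := hF01 (empMedian (Finset.univ.val.map fun i => Z i ω))
      exact ⟨by linarith, by linarith⟩
    rw [this]
    simp
  rcases Nat.eq_zero_or_pos N with hN0 | hN
  · subst hN0
    refine le_trans (prob_le_one) ?_
    rw [show ((0:ℕ):ℝ) = 0 by norm_num]
    simp only [mul_zero, zero_mul, Real.exp_zero, mul_one]
    exact ENNReal.one_le_ofReal.mpr one_le_two
  -- main case
  have hNR : (0:ℝ) < N := by exact_mod_cast hN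
  obtain ⟨t, ht⟩ := exists_cdf_eq ν F hF hFcont (y := s) (by linarith) hs1
  obtain ⟨t', ht'⟩ := exists_cdf_eq ν F hF hFcont (y := 1 - s) (by linarith) (by linarith)
  have hFmono : Monotone F := by
    intro x y hxy
    rw [hF x, hF y]
    exact ENNReal.toReal_mono (measure_ne_top _ _) (measure_mono (Set.Iic_subset_Iic.mpr hxy))
  set k : ℕ := (N + 1) / 2 with hkdef
  have hk1 : 1 ≤ k := by omega
  have hkN : k - 1 < N := by omega
  -- real bounds on k
  have hk_low : ((k - 1 : ℕ) : ℝ) ≤ N * s := by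
    have h2 : 2 * (k - 1) + 1 ≤ N := by omega
    have h2' : 2 * ((k - 1 : ℕ) : ℝ) + 1 ≤ N := by exact_mod_cast h2
    nlinarith
  have hk_high : (N : ℝ) * (1 - s) ≤ (k : ℝ) := by
    have h2 : N ≤ 2 * k := by omega
    have h2' : (N : ℝ) ≤ 2 * (k : ℝ) := by exact_mod_cast h2
    nlinarith
  -- probability of each indicator
  have hmap : ∀ (c : ℝ) (i : Fin N), (μ ((Z i) ⁻¹' Set.Iic c)).toReal = F c := by
    intro c i
    rw [← Measure.map_apply (hZmeas i) measurableSet_Iic, hid i, hF c]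
  -- event inclusion
  set A : Set Ω := {ω | (∑ i : Fin N, if Z i ω ≤ t then (1:ℝ) else 0) ≤ ((k - 1 : ℕ) : ℝ)}
  set B : Set Ω := {ω | ((k : ℕ) : ℝ) ≤ (∑ i : Fin N, if Z i ω ≤ t' then (1:ℝ) else 0)}
  have hsub : {ω | s < max (F (empMedian (Finset.univ.val.map fun i => Z i ω)))
      (1 - F (empMedian (Finset.univ.val.map fun i => Z i ω)))} ⊆ A ∪ B := by
    intro ω hω
    simp only [Set.mem_setOf_eq, lt_max_iff] at hω
    set m : Multiset ℝ := Finset.univ.val.map fun i => Z i ω with hmdef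
    have hcard : Multiset.card m = N := by
      rw [hmdef, Multiset.card_map]
      simp
    set l : List ℝ := m.sort (· ≤ ·) with hldef
    have hlen : l.length = N := by rw [hldef, Multiset.length_sort, hcard]
    have hsorted : l.Pairwise (· ≤ ·) := Multiset.pairwise_sort _ _
    have hmed : empMedian m = l.getD (k - 1) 0 := by
      rw [empMedian, hcard]
    have hcount : ∀ c : ℝ, l.countP (fun x => decide (x ≤ c))
        = (Finset.univ.filter (fun i => Z i ω ≤ c)).card := count_bridge Z ω
    have hsum : ∀ c : ℝ, (∑ i : Fin N, if Z i ω ≤ c then (1:ℝ) else 0)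
        = ((Finset.univ.filter (fun i => Z i ω ≤ c)).card : ℝ) := by
      intro c
      rw [Finset.sum_boole]
    rcases hω with hω | hω
    · -- F m̂ > s = F t, so t < m̂, count ≤ k-1
      left
      have hmt : t < l.getD (k - 1) 0 := by
        by_contra h
        push_neg at h
        have h2 := hFmono h
        rw [hmed] at hω
        rw [ht] at h2
        linarith
      have := sorted_countP_le_index hsorted (hlen ▸ hkN) hmt
      rw [hcount t] at this
      show (∑ i : Fin N, if Z i ω ≤ t then (1:ℝ) else 0) ≤ _
      rw [hsum t]
      exact_mod_cast this
    · -- 1 - F m̂ > s, so F m̂ < 1 - s = F t', m̂ ≤ t', count ≥ k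
      right
      have hmt : l.getD (k - 1) 0 ≤ t' := by
        by_contra h
        push_neg at h
        rw [hmed] at hω
        have := hFmono h.le
        rw [ht'] at this
        linarith
      have := sorted_index_lt_countP hsorted (hlen ▸ hkN) hmt
      rw [hcount t'] at this
      show ((k : ℕ) : ℝ) ≤ (∑ i : Fin N, if Z i ω ≤ t' then (1:ℝ) else 0)
      rw [hsum t']
      have h2 : k ≤ (Finset.univ.filter (fun i => Z i ω ≤ t')).card := by omega
      exact_mod_cast h2
  -- apply Chernoff bounds
  have hA : μ A ≤ ENNReal.ofReal (Real.exp (-2 * (N * s - ((k-1:ℕ):ℝ))^2 / N)) := by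
    refine chernoff_lower μ Z hZmeas t hN hindep
      (fun i => by rw [hmap t i, ht]) (by linarith) hs1.le ?_
    exact hk_low
  have hB : μ B ≤ ENNReal.ofReal (Real.exp (-2 * (N * (1-s) - ((k:ℕ):ℝ))^2 / N)) := by
    refine chernoff_upper μ Z hZmeas t' hN hindep
      (fun i => by rw [hmap t' i, ht']) (by linarith) (by linarith) ?_
    exact hk_high
  -- numeric comparison of exponents
  set Δ : ℝ := Real.sqrt (1 + ε) - 1 with hΔdef
  have hΔpos : 0 < Δ := by rw [hΔdef]; linarith
  have hsΔ : s = (1 + Δ) / 2 := by rw [hsdef, hΔdef]; ring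
  have hexpA : Real.exp (-2 * (N * s - ((k-1:ℕ):ℝ))^2 / N)
      ≤ Real.exp (-(1/2) * N * Δ^2) := by
    rw [Real.exp_le_exp, div_le_iff₀ hNR]
    have hlam : N * Δ / 2 ≤ N * s - ((k-1:ℕ):ℝ) := by
      have h2 : 2 * (k - 1) + 1 ≤ N := by omega
      have h2' : 2 * ((k - 1 : ℕ) : ℝ) + 1 ≤ N := by exact_mod_cast h2
      rw [hsΔ]; nlinarith
    have h0 : (0:ℝ) ≤ N * Δ / 2 := by positivity
    have hsq : (N * Δ / 2)^2 ≤ (N * s - ((k-1:ℕ):ℝ))^2 := by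
      apply pow_le_pow_left₀ h0 hlam
    nlinarith [hsq]
  have hexpB : Real.exp (-2 * (N * (1-s) - ((k:ℕ):ℝ))^2 / N)
      ≤ Real.exp (-(1/2) * N * Δ^2) := by
    rw [Real.exp_le_exp, div_le_iff₀ hNR]
    have hlam : N * Δ / 2 ≤ ((k:ℕ):ℝ) - N * (1 - s) := by
      have h2 : N ≤ 2 * k := by omega
      have h2' : (N : ℝ) ≤ 2 * (k : ℝ) := by exact_mod_cast h2
      rw [hsΔ]; nlinarith
    have h0 : (0:ℝ) ≤ N * Δ / 2 := by positivity
    have hsq : (N * Δ / 2)^2 ≤ (((k:ℕ):ℝ) - N * (1-s))^2 := by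
      apply pow_le_pow_left₀ h0 hlam
    nlinarith [hsq]
  have hfinal : μ A + μ B ≤ ENNReal.ofReal (2 * Real.exp (-(1/2) * ↑N * Δ^2)) := by
    calc μ A + μ B ≤ ENNReal.ofReal (Real.exp (-(1/2) * ↑N * Δ^2))
        + ENNReal.ofReal (Real.exp (-(1/2) * ↑N * Δ^2)) :=
          add_le_add (hA.trans (ENNReal.ofReal_le_ofReal hexpA))
            (hB.trans (ENNReal.ofReal_le_ofReal hexpB))
      _ = ENNReal.ofReal (2 * Real.exp (-(1/2) * ↑N * Δ^2)) := by
          rw [← ENNReal.ofReal_add (Real.exp_nonneg _) (Real.exp_nonneg _), ← two_mul]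
  exact le_trans (measure_mono hsub) (le_trans (measure_union_le A B) hfinal)
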